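/- arXiv:1401.0127 — 2 statements merged into one kernel-verified Lean document; each statement's English description precedes it below -/
import Mathlib

section
/- Let ε > 0, Δt > 0 with Δt < ε², and let A be the finite-difference Neumann Laplacian matrix (symmetric, nonpositive off-diagonal entries, zero row sums). Define the scheme U^{k+1} + Δt A U^{k+1} + (Δt/ε²) diag((U^k)²) U^{k+1} = U^k + (Δt/ε²) U^k (i.e., zero boundary flux α = 0), where (U^k)² denotes componentwise square. If −1 ≤ U^0 ≤ 1 componentwise, then −1 ≤ U^k ≤ 1 componentwise for all k ≥ 0. -/
/-- Discrete maximum principle for the linearized semi-implicit Euler scheme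
for the 1-D Allen–Cahn equation with zero boundary flux. -/
theorem stmt_5 (n : ℕ) (ε Δt : ℝ) (hε : 0 < ε) (hΔt : 0 < Δt) (hcfl : Δt < ε ^ 2)
    (A : Matrix (Fin n) (Fin n) ℝ) (hAsymm : A.IsSymm)
    (hAoff : ∀ i j, i ≠ j → A i j ≤ 0)
    (hArow : ∀ i, ∑ j, A i j = 0)
    (U : ℕ → Fin n → ℝ)
    (hscheme : ∀ k i,
      U (k + 1) i + Δt * A.mulVec (U (k + 1)) i
        + (Δt / ε ^ 2) * (U k i) ^ 2 * U (k + 1) i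
      = U k i + (Δt / ε ^ 2) * U k i)
    (hinit : ∀ i, -1 ≤ U 0 i ∧ U 0 i ≤ 1) :
    ∀ k i, -1 ≤ U k i ∧ U k i ≤ 1 := by
  have hε2 : (0:ℝ) < ε ^ 2 := by positivity
  have hd0 : 0 < Δt / ε ^ 2 := div_pos hΔt hε2
  have hd1 : Δt / ε ^ 2 < 1 := (div_lt_one hε2).2 hcfl
  set d := Δt / ε ^ 2 with hddef
  intro k
  induction k with
  | zero => exact hinit
  | succ k ih =>
    intro i
    constructor
    · -- lower bound via argmin
      obtain ⟨i0, -, hmin⟩ := Finset.exists_min_image Finset.univ (U (k+1))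
        ⟨i, Finset.mem_univ i⟩
      have hbound : -1 ≤ U (k+1) i0 := by
        have hS : A.mulVec (U (k+1)) i0 ≤ 0 := by
          have h1 : ∀ j ∈ Finset.univ, A i0 j * U (k+1) j ≤ A i0 j * U (k+1) i0 := by
            intro j _
            rcases eq_or_ne j i0 with rfl | hne
            · exact le_refl _
            · exact mul_le_mul_of_nonpos_left (hmin j (Finset.mem_univ j))
                (hAoff i0 j (Ne.symm hne))
          calc A.mulVec (U (k+1)) i0 = ∑ j, A i0 j * U (k+1) j := by
                simp [Matrix.mulVec, dotProduct]
            _ ≤ ∑ j, A i0 j * U (k+1) i0 := Finset.sum_le_sum h1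
            _ = (∑ j, A i0 j) * U (k+1) i0 := by rw [Finset.sum_mul]
            _ = 0 := by rw [hArow i0]; ring
        have heq := hscheme k i0
        obtain ⟨hc1, hc2⟩ := ih i0
        by_contra hcon
        push_neg at hcon
        nlinarith [mul_nonneg (by linarith : (0:ℝ) ≤ 1 + U k i0)
            (by nlinarith : (0:ℝ) ≤ 1 + d * U k i0),
          mul_nonpos_of_nonneg_of_nonpos (le_of_lt hΔt) hS,
          mul_pos (by nlinarith [sq_nonneg (U k i0)] : (0:ℝ) < 1 + d * U k i0 ^ 2)
            (by linarith : (0:ℝ) < -1 - U (k+1) i0)]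
      linarith [hmin i (Finset.mem_univ i)]
    · -- upper bound via argmax
      obtain ⟨i0, -, hmax⟩ := Finset.exists_max_image Finset.univ (U (k+1))
        ⟨i, Finset.mem_univ i⟩
      have hbound : U (k+1) i0 ≤ 1 := by
        have hS : 0 ≤ A.mulVec (U (k+1)) i0 := by
          have h1 : ∀ j ∈ Finset.univ, A i0 j * U (k+1) i0 ≤ A i0 j * U (k+1) j := by
            intro j _
            rcases eq_or_ne j i0 with rfl | hne
            · exact le_refl _
            · exact mul_le_mul_of_nonpos_left (hmax j (Finset.mem_univ j))
                (hAoff i0 j (Ne.symm hne))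
          calc (0:ℝ) = (∑ j, A i0 j) * U (k+1) i0 := by rw [hArow i0]; ring
            _ = ∑ j, A i0 j * U (k+1) i0 := by rw [Finset.sum_mul]
            _ ≤ ∑ j, A i0 j * U (k+1) j := Finset.sum_le_sum h1
            _ = A.mulVec (U (k+1)) i0 := by simp [Matrix.mulVec, dotProduct]
        have heq := hscheme k i0
        obtain ⟨hc1, hc2⟩ := ih i0
        by_contra hcon
        push_neg at hcon
        nlinarith [mul_nonneg (by linarith : (0:ℝ) ≤ 1 - U k i0)
            (by nlinarith : (0:ℝ) ≤ 1 - d * U k i0),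
          mul_nonneg (le_of_lt hΔt) hS,
          mul_pos (by nlinarith [sq_nonneg (U k i0)] : (0:ℝ) < 1 + d * U k i0 ^ 2)
            (by linarith : (0:ℝ) < U (k+1) i0 - 1)]
      linarith [hmax i (Finset.mem_univ i)]
end

section
/- Under the hypotheses of the Allen–Cahn semi-implicit scheme with α = 0 and Δt < ε², setting V = U^k − 1 (componentwise), the update satisfies the identity (I + (Δt/ε²) diag((V+1)²) + Δt A)(U^{k+1} − 1) = (1 − Δt/ε²) V − (Δt/ε²) V², where V² is the componentwise square. Moreover if V ≤ 0 componentwise then the right-hand side is ≤ 0 componentwise. -/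
/-- Key algebraic identity in the proof of the discrete maximum principle for the
semi-implicit Allen–Cahn scheme, for the shifted variable `V = U^k − 1`. -/
theorem stmt_6 (n : ℕ) (ε Δt : ℝ) (hε : 0 < ε) (hΔt : 0 < Δt) (hcfl : Δt < ε ^ 2)
    (A : Matrix (Fin n) (Fin n) ℝ) (hAsymm : A.IsSymm)
    (hAoff : ∀ i j, i ≠ j → A i j ≤ 0)
    (hArow : ∀ i, ∑ j, A i j = 0)
    (U W : Fin n → ℝ)
    (hscheme : ∀ i,
      W i + Δt * A.mulVec W i + (Δt / ε ^ 2) * (U i) ^ 2 * W i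
        = U i + (Δt / ε ^ 2) * U i)
    (V : Fin n → ℝ) (hV : ∀ i, V i = U i - 1) :
    (((1 : Matrix (Fin n) (Fin n) ℝ)
        + (Δt / ε ^ 2) • Matrix.diagonal (fun i => (V i + 1) ^ 2)
        + Δt • A).mulVec (fun i => W i - 1)
      = fun i => (1 - Δt / ε ^ 2) * V i - (Δt / ε ^ 2) * (V i) ^ 2) ∧
    ((∀ i, V i ≤ 0) →
      ∀ i, (1 - Δt / ε ^ 2) * V i - (Δt / ε ^ 2) * (V i) ^ 2 ≤ 0) := by
  have hc : (0:ℝ) < Δt / ε ^ 2 := div_pos hΔt (by positivity)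
  have hc1 : Δt / ε ^ 2 < 1 := (div_lt_one (by positivity)).2 hcfl
  constructor
  · funext i
    have hmv : A.mulVec (fun j => W j - 1) i = A.mulVec W i := by
      simp only [Matrix.mulVec, dotProduct, mul_sub, mul_one,
        Finset.sum_sub_distrib, hArow i, sub_zero]
    simp only [Matrix.add_mulVec, Matrix.one_mulVec, Matrix.smul_mulVec,
      Matrix.mulVec_diagonal, Pi.add_apply, Pi.smul_apply, smul_eq_mul, hmv]
    have hU : V i + 1 = U i := by rw [hV i]; ring
    have hs := hscheme i
    have hVi : V i = U i - 1 := hV i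
    rw [hU, hVi]
    linear_combination hs
  · intro h i
    have := h i
    nlinarith [sq_nonneg (V i)]
end
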